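/- Let K be a field of characteristic p > 0, let m > 0, and let ∂ = (∂_n)_{0 ≤ n < p^m} be an iterative m-truncated HS-derivation (a G_a[m]-derivation) on K such that ∂_1 is not the zero map. Then there exists x ∈ K such that ∂_1(x) = 1 and ∂_n(x) = 0 for all n with 2 ≤ n ≤ p^m − 1. -/

import Mathlib

open Finset

/-- `D` is an `m`-truncated HS-derivation on `R` (for the prime `p`):
only the maps `D n` for `n < p ^ m` are relevant. -/
def IsTruncHSDeriv (p m : ℕ) {R : Type*} [CommRing R] (D : ℕ → R → R) : Prop :=
  (∀ n, n < p ^ m → ∀ x y, D n (x + y) = D n x + D n y) ∧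
  (∀ x, D 0 x = x) ∧
  (∀ n, n < p ^ m → ∀ x y, D n (x * y) = ∑ ij ∈ Finset.HasAntidiagonal.antidiagonal n, D ij.1 x * D ij.2 y)

/-- `D` is an iterative `m`-truncated HS-derivation (a `G_a[m]`-derivation). -/
def IsGaIterativeTrunc (p m : ℕ) {R : Type*} [CommRing R] (D : ℕ → R → R) : Prop :=
  (∀ i j : ℕ, i < p ^ m → j < p ^ m → i + j < p ^ m →
    ∀ x, D i (D j x) = (i + j).choose i • D (i + j) x) ∧
  (∀ i j : ℕ, i < p ^ m → j < p ^ m → p ^ m ≤ i + j → ∀ x, D i (D j x) = 0)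


namespace GaAux


lemma sum_anti_two {K : Type*} [AddCommMonoid K] {n : ℕ} (hn : 1 ≤ n) (F : ℕ → ℕ → K)
    (hF : ∀ i j, i + j = n → 2 ≤ i → F i j = 0) :
    ∑ ij ∈ antidiagonal n, F ij.1 ij.2 = F 0 n + F 1 (n-1) := by
  rw [Finset.Nat.sum_antidiagonal_eq_sum_range_succ F n]
  rw [← Finset.sum_subset (s₁ := range 2) (by intro x hx; simp at hx ⊢; omega)
    (by intro x hx hx2; simp at hx hx2; exact hF x (n - x) (by omega) (by omega))]
  simp [Finset.sum_range_succ]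

lemma sum_anti_one {K : Type*} [AddCommMonoid K] (n : ℕ) (F : ℕ → ℕ → K)
    (hF : ∀ i j, i + j = n → 1 ≤ i → F i j = 0) :
    ∑ ij ∈ antidiagonal n, F ij.1 ij.2 = F 0 n := by
  rw [Finset.Nat.sum_antidiagonal_eq_sum_range_succ F n]
  rw [← Finset.sum_subset (s₁ := range 1) (by intro x hx; simp at hx ⊢; omega)
    (by intro x hx hx2; simp at hx hx2; exact hF x (n - x) (by omega) (by omega))]
  simp

section basic
variable {p M : ℕ} {K : Type*} [Field K] {d : ℕ → K → K}
  (hd : IsTruncHSDeriv p M d)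

include hd

lemma dzero {n : ℕ} (hn : n < p ^ M) : d n 0 = 0 := by
  have := hd.1 n hn 0 0
  simp at this
  linear_combination this

lemma dneg {n : ℕ} (hn : n < p ^ M) (x : K) : d n (-x) = - d n x := by
  have h := hd.1 n hn x (-x)
  simp [dzero hd hn] at h
  linear_combination -h

lemma dsmul {n : ℕ} (hn : n < p ^ M) (c : ℕ) (x : K) : d n (c • x) = c • d n x := by
  induction c with
  | zero => simpa using dzero hd hn
  | succ k ih =>
      have hs : (k + 1 : ℕ) • x = k • x + x := by rw [add_smul, one_smul]
      rw [hs, hd.1 n hn, ih, add_smul, one_smul]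

lemma done {n : ℕ} (h1 : 1 ≤ n) (hn : n < p ^ M) : d n 1 = 0 := by
  induction n using Nat.strong_induction_on with
  | _ n ih =>
    have h := hd.2.2 n hn 1 1
    rw [mul_one] at h
    rw [Finset.Nat.sum_antidiagonal_eq_sum_range_succ (fun i j => d i 1 * d j 1) n] at h
    have hsub : ∑ k ∈ range (n+1), d k 1 * d (n-k) 1
        = ∑ k ∈ ({0, n} : Finset ℕ), d k 1 * d (n-k) 1 := by
      refine (Finset.sum_subset (by intro x hx; simp at hx ⊢; omega) ?_).symm
      intro x hx hx2
      simp at hx hx2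
      rw [ih x (by omega) (by omega) (by omega), zero_mul]
    rw [hsub, Finset.sum_pair (by omega : (0:ℕ) ≠ n)] at h
    rw [hd.2.1, Nat.sub_self, Nat.sub_zero, hd.2.1, one_mul, mul_one] at h
    linear_combination -h

lemma dinv {b : K} (hb0 : b ≠ 0) (hb : ∀ j, 1 ≤ j → j < p ^ M → d j b = 0) :
    ∀ j, 1 ≤ j → j < p ^ M → d j b⁻¹ = 0 := by
  intro j hj1 hj
  have h := hd.2.2 j hj b b⁻¹
  rw [mul_inv_cancel₀ hb0, done hd hj1 hj] at h
  rw [sum_anti_one j (fun i k => d i b * d k b⁻¹)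
    (by intro i k hik hi; show d i b * d k b⁻¹ = 0; rw [hb i hi (by omega), zero_mul])] at h
  rw [hd.2.1] at h
  exact (mul_eq_zero.mp h.symm).resolve_left hb0

lemma dpow {N : ℕ} (hN : N ≤ p ^ M) {x : K} (hx1 : d 1 x = 1)
    (hx : ∀ i, 2 ≤ i → i < N → d i x = 0) :
    ∀ k n, n < N → d n (x ^ k) = k.choose n • x ^ (k - n) := by
  intro k
  induction k with
  | zero =>
      intro n hn
      rcases Nat.eq_zero_or_pos n with rfl | hn1
      · simp [hd.2.1]
      · simp [done hd hn1 (lt_of_lt_of_le hn hN), Nat.choose_eq_zero_of_lt hn1]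
  | succ k ih =>
      intro n hn
      have hleib := hd.2.2 n (lt_of_lt_of_le hn hN) x (x ^ k)
      rw [← pow_succ'] at hleib
      rcases Nat.eq_zero_or_pos n with rfl | hn1
      · simp [hd.2.1]
      obtain ⟨n', rfl⟩ : ∃ n', n = n' + 1 := ⟨n-1, by omega⟩
      rw [sum_anti_two hn1 (fun i j => d i x * d j (x ^ k))
        (by intro i j hij hi; show d i x * d j (x ^ k) = 0;
            rw [hx i hi (by omega), zero_mul])] at hleib
      rw [hd.2.1, hx1, one_mul, ih _ hn] at hleib
      simp only [Nat.add_sub_cancel] at hleib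
      rw [ih n' (by omega)] at hleib
      rw [hleib]
      rcases Nat.lt_or_ge k n' with hc | hc
      · rw [Nat.choose_eq_zero_of_lt hc, Nat.choose_eq_zero_of_lt (by omega),
          Nat.choose_eq_zero_of_lt (by omega)]
        simp
      rcases Nat.eq_or_lt_of_le hc with rfl | hc2
      · rw [Nat.choose_eq_zero_of_lt (by omega), Nat.choose_self, Nat.choose_self]
        simp
      · have h1 : x * (k.choose (n'+1) • x ^ (k - (n'+1))) = k.choose (n'+1) • x ^ (k - n') := by
          rw [mul_smul_comm, ← pow_succ']
          congr 2
          omega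
        rw [h1, ← add_smul]
        have hcc : k.choose (n'+1) + k.choose n' = (k+1).choose (n'+1) := by
          rw [Nat.choose_succ_succ]; simp only [Nat.succ_eq_add_one]; omega
        rw [hcc]
        congr 2
        omega

end basic

section frob
open Polynomial
variable {p M : ℕ} [Fact p.Prime] {K : Type*} [Field K] [CharP K p] {d : ℕ → K → K}
  (hd : IsTruncHSDeriv p M d)

include hd

lemma dfrob (x : K) : ∀ n, n < p ^ M →
    d n (x ^ p) = if p ∣ n then (d (n / p) x) ^ p else 0 := by
  have hp : p.Prime := Fact.out
  have hq1 : 1 ≤ p ^ M := Nat.one_le_pow _ _ hp.pos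
  set q := p ^ M with hq
  set I : Ideal (Polynomial K) := Ideal.span {(X : Polynomial K) ^ q} with hI
  set π := Ideal.Quotient.mk I with hπ
  set E : K → Polynomial K := fun z => ∑ n ∈ range q, C (d n z) * X ^ n with hE
  have hcoeff : ∀ z n, (E z).coeff n = if n < q then d n z else 0 := by
    intro z n
    simp only [hE, finset_sum_coeff, coeff_C_mul, coeff_X_pow]
    by_cases h : n < q
    · rw [if_pos h, Finset.sum_eq_single n]
      · simp
      · intro b _ hb
        simp [Ne.symm hb]
      · intro hmem
        exact absurd (Finset.mem_range.mpr h) hmem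
    · rw [if_neg h]
      apply Finset.sum_eq_zero
      intro i hi
      simp only [Finset.mem_range] at hi
      rw [if_neg (by omega), mul_zero]
  have hext : ∀ f g : Polynomial K, π f = π g → ∀ n, n < q → f.coeff n = g.coeff n := by
    intro f g hfg n hn
    have h1 : f - g ∈ I := (Ideal.Quotient.eq).mp hfg
    have h2 : (X : Polynomial K) ^ q ∣ f - g := (Ideal.mem_span_singleton).mp h1
    have h3 := (Polynomial.X_pow_dvd_iff).mp h2 n hn
    rw [coeff_sub, sub_eq_zero] at h3
    exact h3
  have hmul : ∀ z w : K, π (E (z * w)) = π (E z * E w) := by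
    intro z w
    rw [Ideal.Quotient.eq]
    apply (Ideal.mem_span_singleton).mpr
    apply (Polynomial.X_pow_dvd_iff).mpr
    intro n hn
    rw [coeff_sub, sub_eq_zero, hcoeff, if_pos hn, coeff_mul]
    rw [hd.2.2 n hn z w]
    apply Finset.sum_congr rfl
    intro ij hij
    have hijs := Finset.HasAntidiagonal.mem_antidiagonal.mp hij
    rw [hcoeff, hcoeff, if_pos (by omega), if_pos (by omega)]
  have hone : E 1 = 1 := by
    simp only [hE]
    rw [Finset.sum_eq_single 0]
    · simp [hd.2.1]
    · intro b hb hb0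
      simp only [Finset.mem_range] at hb
      rw [done hd (by omega) hb]
      simp
    · intro h
      simp at h
      omega
  have hpowE : ∀ (z : K) (k : ℕ), π (E (z ^ k)) = (π (E z)) ^ k := by
    intro z k
    induction k with
    | zero => simp [pow_zero, hone]
    | succ k ih =>
        rw [pow_succ, hmul, map_mul, ih, pow_succ]
  intro n hn
  have hchar : (E x) ^ p = ∑ i ∈ range q, C ((d i x) ^ p) * X ^ (p * i) := by
    simp only [hE]
    rw [sum_pow_char]
    apply Finset.sum_congr rfl
    intro i _
    rw [mul_pow, ← C_pow, ← pow_mul, Nat.mul_comm]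
  have h1 : π (E (x ^ p)) = π ((E x) ^ p) := by rw [hpowE, map_pow]
  have h2 := hext _ _ h1 n hn
  rw [hcoeff, if_pos hn, hchar] at h2
  rw [h2]
  simp only [finset_sum_coeff, coeff_C_mul, coeff_X_pow]
  by_cases hdvd : p ∣ n
  · rw [if_pos hdvd, Finset.sum_eq_single (n / p)]
    · rw [if_pos (Nat.mul_div_cancel' hdvd).symm, mul_one]
    · intro b _ hb
      rw [if_neg, mul_zero]
      intro hcon
      exact hb (by rw [hcon, Nat.mul_div_cancel_left _ hp.pos])
    · intro hmem
      exact absurd (Finset.mem_range.mpr (lt_of_le_of_lt (Nat.div_le_self n p) hn)) hmem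
  · rw [if_neg hdvd]
    apply Finset.sum_eq_zero
    intro i _
    rw [if_neg, mul_zero]
    intro hcon
    exact hdvd ⟨i, hcon⟩

end frob

section iter
variable {p M : ℕ} (hp : p.Prime) {K : Type*} [Field K] [CharP K p] {d : ℕ → K → K}
  (hd : IsTruncHSDeriv p M d) (hiter : IsGaIterativeTrunc p M d) (hM : 0 < M)

include hp hd hiter hM

/-- iterate of d 1 equals factorial smul of d i, for i < p -/
lemma diterate : ∀ i, i < p → ∀ y, (d 1)^[i] y = i.factorial • d i y := by
  intro i hip
  induction i with
  | zero => intro y; simp [hd.2.1]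
  | succ i ih =>
      intro y
      have hpq : p ≤ p ^ M := Nat.le_self_pow (by omega) p
      have h1q : 1 < p ^ M := lt_of_lt_of_le hp.one_lt hpq
      have hiq : i < p ^ M := by omega
      have hsiq : i + 1 < p ^ M := by omega
      rw [Function.iterate_succ_apply', ih (by omega) y,
        dsmul hd (by omega) _ _, hiter.1 1 i (by omega) hiq (by omega) y]
      rw [smul_smul, Nat.factorial_succ, Nat.choose_one_right, Nat.add_comm 1 i]
      congr 1
      ring

omit hp hiter hM in
lemma dzero_pow (h1q : 1 < p ^ M) : ∀ j, (d 1)^[j] 0 = 0 := by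
  intro j
  induction j with
  | zero => simp
  | succ j ih => rw [Function.iterate_succ_apply', ih, dzero hd (by omega)]

omit hp hiter hM in
lemma done_pow (h1q : 1 < p ^ M) : ∀ j, 1 ≤ j → (d 1)^[j] 1 = 0 := by
  intro j h1j
  obtain ⟨j', rfl⟩ : ∃ j', j = j' + 1 := ⟨j - 1, by omega⟩
  rw [Function.iterate_succ_apply, done hd le_rfl h1q, dzero_pow hd h1q]

lemma dx1 (hne : d 1 ≠ 0) :
    ∃ x₁ : K, d 1 x₁ = 1 ∧ ∀ i, 2 ≤ i → i < p → d i x₁ = 0 := by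
  classical
  have hp2 : 2 ≤ p := hp.two_le
  have hpq : p ≤ p ^ M := Nat.le_self_pow (by omega) p
  have h1q : 1 < p ^ M := lt_of_lt_of_le hp.one_lt hpq
  obtain ⟨z, hz⟩ := Function.ne_iff.mp hne
  have hz : d 1 z ≠ 0 := hz
  have hfp : ∀ y : K, (d 1)^[p] y = 0 := by
    intro y
    have hstep : (d 1)^[p] y = d 1 ((d 1)^[p-1] y) := by
      conv_lhs => rw [show p = (p-1)+1 by omega]
      rw [Function.iterate_succ_apply']
    rw [hstep, diterate hp hd hiter hM (p-1) (by omega) y, dsmul hd h1q]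
    rcases Nat.lt_or_ge (1 + (p-1)) (p ^ M) with hlt | hge
    · rw [hiter.1 1 (p-1) h1q (by omega) hlt y]
      have hpp : (1 + (p-1)) = p := by omega
      rw [hpp, Nat.choose_one_right, smul_smul, nsmul_eq_mul, Nat.cast_mul,
        CharP.cast_eq_zero K p, mul_zero, zero_mul]
    · rw [hiter.2 1 (p-1) h1q (by omega) (by omega) y, smul_zero]
  have hQp : ∃ k, (d 1)^[k] z = 0 := ⟨p, hfp z⟩
  set k := Nat.find hQp with hkdef
  have hk0 : (d 1)^[k] z = 0 := Nat.find_spec hQp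
  have hk2 : 2 ≤ k := by
    by_contra hcon
    have : k = 0 ∨ k = 1 := by omega
    rcases this with h | h
    · rw [h] at hk0
      simp only [Function.iterate_zero_apply] at hk0
      exact hz (by rw [hk0, dzero hd h1q])
    · rw [h] at hk0
      simp only [Function.iterate_one] at hk0
      exact hz hk0
  obtain ⟨k', hkk⟩ : ∃ k', k = k' + 2 := ⟨k - 2, by omega⟩
  set u := (d 1)^[k'] z with hu
  set c := d 1 u with hc
  have hc_ne : c ≠ 0 := by
    intro h0
    have : (d 1)^[k' + 1] z = 0 := by
      rw [Function.iterate_succ_apply', ← hu]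
      exact h0
    exact Nat.find_min hQp (by omega) this
  have hcc : d 1 c = 0 := by
    have h2 : (d 1)^[k' + 2] z = 0 := by rw [← hkk]; exact hk0
    have hh : (d 1)^[k'+2] z = d 1 (d 1 ((d 1)^[k'] z)) := by
      rw [Function.iterate_succ_apply', Function.iterate_succ_apply']
    rw [hc, hu, ← hh]
    exact h2
  have hcinv : d 1 c⁻¹ = 0 := by
    have h := hd.2.2 1 h1q c c⁻¹
    rw [mul_inv_cancel₀ hc_ne, done hd le_rfl h1q] at h
    rw [sum_anti_two le_rfl (fun i j => d i c * d j c⁻¹)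
      (by intro i j hij hi; exact absurd hij (by omega))] at h
    rw [hd.2.1, hd.2.1, hcc, zero_mul, add_zero] at h
    exact (mul_eq_zero.mp h.symm).resolve_left hc_ne
  have hx1 : d 1 (u * c⁻¹) = 1 := by
    have h := hd.2.2 1 h1q u c⁻¹
    rw [sum_anti_two le_rfl (fun i j => d i u * d j c⁻¹)
      (by intro i j hij hi; exact absurd hij (by omega))] at h
    rw [hd.2.1, hd.2.1, hcinv, mul_zero, zero_add, ← hc] at h
    rw [h, mul_inv_cancel₀ hc_ne]
  refine ⟨u * c⁻¹, hx1, ?_⟩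
  intro i h2i hip
  have hiq : i < p ^ M := by omega
  have hiter_i := diterate hp hd hiter hM i hip (u * c⁻¹)
  have hl : (d 1)^[i] (u * c⁻¹) = 0 := by
    have hstep : (d 1)^[i] (u * c⁻¹) = (d 1)^[i-1] (d 1 (u * c⁻¹)) := by
      conv_lhs => rw [show i = (i-1)+1 by omega]
      rw [Function.iterate_succ_apply]
    rw [hstep, hx1, done_pow hd h1q (i-1) (by omega)]
  rw [hl] at hiter_i
  have hfac : ((i.factorial : ℕ) : K) ≠ 0 := by
    intro h0
    rw [CharP.cast_eq_zero_iff K p] at h0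
    exact absurd ((Nat.Prime.dvd_factorial hp).mp h0) (by omega)
  have h2 := hiter_i.symm
  rw [nsmul_eq_mul] at h2
  exact (mul_eq_zero.mp h2).resolve_left hfac

lemma dfinal (v : K) (hv : d (p ^ M - 1) v ≠ 0) :
    ∃ x : K, d 1 x = 1 ∧ ∀ n, 2 ≤ n → n < p ^ M → d n x = 0 := by
  have hp2 : 2 ≤ p := hp.two_le
  have hpq : p ≤ p ^ M := Nat.le_self_pow (by omega) p
  have h1q : 1 < p ^ M := lt_of_lt_of_le hp.one_lt hpq
  set q := p ^ M with hq
  set a := d (q - 2) v with ha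
  set b := d (q - 1) v with hb
  have hbconst : ∀ j, 1 ≤ j → j < q → d j b = 0 := by
    intro j hj1 hj
    exact hiter.2 j (q - 1) hj (by omega) (by omega) v
  have haconst : ∀ j, 2 ≤ j → j < q → d j a = 0 := by
    intro j hj2 hj
    exact hiter.2 j (q - 2) hj (by omega) (by omega) v
  have ha1 : d 1 a = - b := by
    have h := hiter.1 1 (q - 2) h1q (by omega) (by omega) v
    rw [ha, h, show 1 + (q - 2) = q - 1 by omega, Nat.choose_one_right, nsmul_eq_mul]
    have hcast : ((q - 1 : ℕ) : K) = -1 := by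
      have hqz : ((q : ℕ) : K) = 0 := by
        rw [hq, Nat.cast_pow, CharP.cast_eq_zero K p, zero_pow (by omega)]
      rw [Nat.cast_sub (by omega), hqz, Nat.cast_one, zero_sub]
    rw [hcast, ← hb]
    ring
  have hbinv : ∀ j, 1 ≤ j → j < q → d j b⁻¹ = 0 := dinv hd hv hbconst
  refine ⟨- (a * b⁻¹), ?_, ?_⟩
  · rw [dneg hd h1q, hd.2.2 1 h1q a b⁻¹]
    rw [sum_anti_two le_rfl (fun i j => d i a * d j b⁻¹)
      (by intro i j hij hi; exact absurd hij (by omega))]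
    rw [hd.2.1, hd.2.1, hbinv 1 le_rfl h1q, mul_zero, zero_add, ha1]
    field_simp
  · intro n h2n hn
    rw [dneg hd hn, hd.2.2 n hn a b⁻¹]
    rw [sum_anti_one n (fun i j => d i a * d j b⁻¹)
      (by intro i j hij hi
          show d i a * d j b⁻¹ = 0
          rcases Nat.lt_or_ge j 1 with hj | hj
          · have : i = n := by omega
            rw [this, haconst n h2n hn, zero_mul]
          · rw [hbinv j hj (by omega), mul_zero])]
    rw [hd.2.1, hbinv n (by omega) hn, mul_zero, neg_zero]

end iter


lemma sum_anti_pmul {K : Type*} [AddCommMonoid K] {p : ℕ} (hp0 : 0 < p) (n : ℕ) (F : ℕ → ℕ → K)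
    (hF : ∀ i j, i + j = p * n → ¬ p ∣ i → F i j = 0) :
    ∑ ij ∈ antidiagonal (p * n), F ij.1 ij.2 = ∑ kl ∈ antidiagonal n, F (p * kl.1) (p * kl.2) := by
  rw [Finset.Nat.sum_antidiagonal_eq_sum_range_succ F (p * n),
    Finset.Nat.sum_antidiagonal_eq_sum_range_succ (fun a b => F (p * a) (p * b)) n]
  have hstep1 : ∑ i ∈ range (p * n + 1), F i (p * n - i)
      = ∑ i ∈ (range (p * n + 1)).filter (fun i => p ∣ i), F i (p * n - i) := by
    refine (Finset.sum_filter_of_ne ?_).symm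
    intro i hi hne
    by_contra hdvd
    exact hne (hF i (p * n - i) (by simp at hi; omega) hdvd)
  rw [hstep1]
  refine Finset.sum_bij' (fun i _ => i / p) (fun k _ => p * k) ?_ ?_ ?_ ?_ ?_
  · intro i hi
    simp only [Finset.mem_filter, Finset.mem_range] at hi
    simp only [Finset.mem_range]
    obtain ⟨c, rfl⟩ := hi.2
    rw [Nat.mul_div_cancel_left _ hp0]
    have := hi.1
    exact Nat.lt_succ_of_le (Nat.le_of_mul_le_mul_left (by omega) hp0)
  · intro k hk
    simp only [Finset.mem_range] at hk
    simp only [Finset.mem_filter, Finset.mem_range]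
    exact ⟨by nlinarith [Nat.mul_le_mul_left p (Nat.lt_succ_iff.mp hk)], ⟨k, rfl⟩⟩
  · intro i hi
    simp only [Finset.mem_filter] at hi
    exact Nat.mul_div_cancel' hi.2
  · intro k _
    exact Nat.mul_div_cancel_left _ hp0
  · intro i hi
    simp only [Finset.mem_filter, Finset.mem_range] at hi
    obtain ⟨c, rfl⟩ := hi.2
    show F (p * c) (p * n - p * c) = F (p * (p * c / p)) (p * (n - p * c / p))
    rw [Nat.mul_div_cancel_left _ hp0]
    congr 1
    have hcn : c ≤ n := Nat.le_of_mul_le_mul_left (by omega) hp0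
    obtain ⟨e, rfl⟩ := Nat.le.dest hcn
    rw [Nat.add_sub_cancel_left, Nat.mul_add, Nat.add_sub_cancel_left]


lemma lucas_cast {p : ℕ} (hp : p.Prime) {K : Type*} [AddGroupWithOne K] [CharP K p] (a b : ℕ) :
    (((p * a).choose (p * b) : ℕ) : K) = ((a.choose b : ℕ) : K) := by
  haveI : Fact p.Prime := ⟨hp⟩
  apply CharP.natCast_eq_natCast' K p
  have h := Choose.choose_modEq_choose_mod_mul_choose_div_nat (p := p) (n := p * a) (k := p * b)
  simpa [Nat.mul_mod_right, Nat.mul_div_cancel_left _ hp.pos] using h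

universe u

theorem main_aux {p : ℕ} (hp : p.Prime) :
    ∀ M : ℕ, 0 < M → ∀ (K : Type u) (_ : Field K) (_ : CharP K p) (d : ℕ → K → K),
      IsTruncHSDeriv p M d → IsGaIterativeTrunc p M d → d 1 ≠ 0 →
      ∃ x : K, d 1 x = 1 ∧ ∀ n, 2 ≤ n → n < p ^ M → d n x = 0 := by
  intro M
  induction M with
  | zero => intro h; omega
  | succ m ih =>
    intro _ K _F _C d hd hiter hne
    have hp2 := hp.two_le
    haveI : Fact p.Prime := ⟨hp⟩
    obtain ⟨x₁, hx11, hx1i⟩ := dx1 hp hd hiter (by omega) hne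
    rcases Nat.eq_zero_or_pos m with rfl | hm
    · -- base case M = 1
      apply dfinal hp hd hiter (by omega) (x₁ ^ (p - 1))
      have hpow := dpow hd (N := p) (by rw [pow_one]) hx11 hx1i (p-1) (p-1) (by omega)
      rw [show p ^ 1 - 1 = p - 1 by rw [pow_one]]
      rw [hpow, Nat.sub_self, Nat.choose_self, pow_zero, one_smul]
      exact one_ne_zero
    · -- inductive step
      set q := p ^ (m + 1) with hqdef
      have hqm : q = p * p ^ m := by rw [hqdef, pow_succ, Nat.mul_comm]
      have hpmpos : 0 < p ^ m := pow_pos (by omega : 0 < p) m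
      have hpq : p ≤ q := Nat.le_self_pow (by omega) p
      have hq1 : 1 < q := by omega
      have hpm_lt : ∀ n : ℕ, n < p ^ m → p * n < q := by
        intro n hn
        rw [hqm]
        exact (Nat.mul_lt_mul_left (by omega)).mpr hn
      have hpltq : p < q := by
        rw [hqm]
        calc p = p * 1 := by ring
        _ < p * p ^ m := by
              apply (Nat.mul_lt_mul_left (by omega)).mpr
              have : p ^ 1 ≤ p ^ m := Nat.pow_le_pow_right (by omega) hm
              rw [pow_one] at this
              omega
      -- the subfield C₁
      have hC1inv : ∀ x : K, (∀ j, j < q → ¬ p ∣ j → d j x = 0) →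
          (∀ j, j < q → ¬ p ∣ j → d j x⁻¹ = 0) := by
        intro x hx
        by_cases hx0 : x = 0
        · intro j hj hpj
          rw [hx0, inv_zero]
          have hj1 : 1 ≤ j := by
            rcases Nat.eq_zero_or_pos j with rfl | h
            · exact absurd (dvd_zero p) hpj
            · omega
          exact dzero hd hj
        · intro j
          induction j using Nat.strong_induction_on with
          | _ j ihj =>
            intro hj hpj
            have hj1 : 1 ≤ j := by
              rcases Nat.eq_zero_or_pos j with rfl | h
              · exact absurd (dvd_zero p) hpj
              · omega
            have h := hd.2.2 j hj x x⁻¹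
            rw [mul_inv_cancel₀ hx0, done hd hj1 hj] at h
            rw [sum_anti_one j (fun i k => d i x * d k x⁻¹) ?_] at h
            · rw [hd.2.1] at h
              exact (mul_eq_zero.mp h.symm).resolve_left hx0
            · intro i k hik hi
              show d i x * d k x⁻¹ = 0
              by_cases hpi : p ∣ i
              · have hpk : ¬ p ∣ k := by
                  intro hk
                  exact hpj (by rw [← hik]; exact Nat.dvd_add hpi hk)
                rw [ihj k (by omega) (by omega) hpk, mul_zero]
              · rw [hx i (by omega) hpi, zero_mul]
      let C₁ : Subfield K :=
        { carrier := {x : K | ∀ j, j < q → ¬ p ∣ j → d j x = 0}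
          mul_mem' := by
            intro x y hx hy
            intro j hj hpj
            rw [hd.2.2 j hj x y]
            apply Finset.sum_eq_zero
            intro ij hij
            have hijs := Finset.HasAntidiagonal.mem_antidiagonal.mp hij
            by_cases hpi : p ∣ ij.1
            · have hpk : ¬ p ∣ ij.2 := by
                intro hk
                exact hpj (by rw [← hijs]; exact Nat.dvd_add hpi hk)
              rw [hy ij.2 (by omega) hpk, mul_zero]
            · rw [hx ij.1 (by omega) hpi, zero_mul]
          one_mem' := by
            intro j hj hpj
            have hj1 : 1 ≤ j := by
              rcases Nat.eq_zero_or_pos j with rfl | h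
              · exact absurd (dvd_zero p) hpj
              · omega
            exact done hd hj1 hj
          add_mem' := by
            intro x y hx hy j hj hpj
            rw [hd.1 j hj x y, hx j hj hpj, hy j hj hpj, add_zero]
          zero_mem' := by
            intro j hj hpj
            exact dzero hd hj
          neg_mem' := by
            intro x hx j hj hpj
            rw [dneg hd hj, hx j hj hpj, neg_zero]
          inv_mem' := fun x hx => hC1inv x hx }
      have hmemC : ∀ x : K, x ∈ C₁ ↔ (∀ j, j < q → ¬ p ∣ j → d j x = 0) := fun _ => Iff.rfl
      haveI : CharP C₁ p := by
        constructor
        intro n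
        have hcast : ((n : C₁) : K) = (n : K) := map_natCast C₁.subtype n
        rw [← CharP.cast_eq_zero_iff K p n, ← hcast, ZeroMemClass.coe_eq_zero]
      -- the induced derivation
      have stab : ∀ (n : ℕ) (h : p * n < q) (x : C₁) (j : ℕ), j < q → ¬ p ∣ j →
          d j (d (p * n) ↑x) = 0 := by
        intro n h x j hj hpj
        rcases Nat.lt_or_ge (j + p * n) q with hlt | hge
        · rw [hiter.1 j (p * n) hj h hlt ↑x]
          have hnd : ¬ p ∣ (j + p * n) := by
            intro hdvd
            have := Nat.dvd_sub hdvd (Dvd.intro n rfl)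
            rw [Nat.add_sub_cancel] at this
            exact hpj this
          rw [x.2 (j + p * n) hlt hnd, smul_zero]
        · exact hiter.2 j (p * n) hj h hge ↑x
      let d' : ℕ → C₁ → C₁ := fun n x =>
        if h : p * n < q then ⟨d (p * n) ↑x, stab n h x⟩ else 0
      have hd'coe : ∀ (n : ℕ) (x : C₁), p * n < q → ((d' n x : C₁) : K) = d (p * n) ↑x := by
        intro n x h
        simp only [d', dif_pos h]
      have hd'trunc : IsTruncHSDeriv p m d' := by
        refine ⟨?_, ?_, ?_⟩
        · intro n hn x y
          have h := hpm_lt n hn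
          apply Subtype.ext
          rw [show ((d' n x + d' n y : C₁) : K) = ↑(d' n x) + ↑(d' n y) from rfl]
          rw [hd'coe n _ h, hd'coe n x h, hd'coe n y h]
          rw [show ((x + y : C₁) : K) = ↑x + ↑y from rfl]
          exact hd.1 (p * n) h ↑x ↑y
        · intro x
          apply Subtype.ext
          rw [hd'coe 0 x (by simpa using (by omega : (0:ℕ) < q))]
          rw [Nat.mul_zero]
          exact hd.2.1 ↑x
        · intro n hn x y
          have h := hpm_lt n hn
          apply Subtype.ext
          rw [hd'coe n _ h]
          rw [show ((x * y : C₁) : K) = ↑x * ↑y from rfl]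
          rw [hd.2.2 (p * n) h ↑x ↑y]
          rw [sum_anti_pmul hp.pos n (fun i j => d i (↑x) * d j (↑y)) ?_]
          · rw [show ((∑ kl ∈ antidiagonal n, d' kl.1 x * d' kl.2 y : C₁) : K)
                = ∑ kl ∈ antidiagonal n, ((d' kl.1 x * d' kl.2 y : C₁) : K)
                from AddSubmonoidClass.coe_finset_sum _ _]
            apply Finset.sum_congr rfl
            intro kl hkl
            have hkls := Finset.HasAntidiagonal.mem_antidiagonal.mp hkl
            rw [show ((d' kl.1 x * d' kl.2 y : C₁) : K) = ↑(d' kl.1 x) * ↑(d' kl.2 y) from rfl]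
            rw [hd'coe kl.1 x (hpm_lt kl.1 (by omega)), hd'coe kl.2 y (hpm_lt kl.2 (by omega))]
          · intro i j hij hpi
            show d i ↑x * d j ↑y = 0
            rw [x.2 i (by omega) hpi, zero_mul]
      have hd'iter : IsGaIterativeTrunc p m d' := by
        constructor
        · intro i j hi hj hij x
          apply Subtype.ext
          rw [hd'coe i _ (hpm_lt i hi), hd'coe j x (hpm_lt j hj)]
          rw [hiter.1 (p * i) (p * j) (hpm_lt i hi) (hpm_lt j hj)
            (by rw [← Nat.mul_add]; exact hpm_lt _ hij) ↑x]
          have hrhs : (((i + j).choose i • d' (i + j) x : C₁) : K)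
              = (i + j).choose i • ((d' (i + j) x : C₁) : K) := by
            push_cast
            rfl
          rw [hrhs, hd'coe (i + j) x (hpm_lt _ hij)]
          rw [nsmul_eq_mul, nsmul_eq_mul, ← Nat.mul_add]
          rw [lucas_cast hp (i + j) i]
        · intro i j hi hj hij x
          apply Subtype.ext
          rw [hd'coe i _ (hpm_lt i hi), hd'coe j x (hpm_lt j hj)]
          rw [hiter.2 (p * i) (p * j) (hpm_lt i hi) (hpm_lt j hj)
            (by rw [← Nat.mul_add, pow_succ, Nat.mul_comm (p^m) p]; exact Nat.mul_le_mul_left p hij) ↑x]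
          rfl
      -- d' 1 is nonzero, witnessed by x₁ ^ p
      have hθmem : (x₁ ^ p) ∈ C₁ := by
        rw [hmemC]
        intro j hj hpj
        rw [dfrob hd x₁ j hj, if_neg hpj]
      have hd'ne : d' 1 ≠ 0 := by
        intro h0
        have h1 : d' 1 ⟨x₁ ^ p, hθmem⟩ = 0 := by rw [h0]; rfl
        have h2 := congrArg (fun z : C₁ => (z : K)) h1
        rw [hd'coe 1 _ (by rw [Nat.mul_one]; exact hpltq)] at h2
        rw [Nat.mul_one] at h2
        rw [show ((⟨x₁ ^ p, hθmem⟩ : C₁) : K) = x₁ ^ p from rfl] at h2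
        rw [dfrob hd x₁ p hpltq, if_pos (dvd_refl p), Nat.div_self (by omega)] at h2
        rw [hx11, one_pow] at h2
        exact one_ne_zero ((ZeroMemClass.coe_zero C₁) ▸ h2)
      -- apply the induction hypothesis
      obtain ⟨x', hx'1, hx'n⟩ := ih hm C₁ inferInstance inferInstance d' hd'trunc hd'iter hd'ne
      -- w = x' ^ (p^m - 1)
      set w : C₁ := x' ^ (p ^ m - 1) with hwdef
      have hw : d' (p ^ m - 1) w = 1 := by
        have h := dpow hd'trunc (N := p ^ m) le_rfl hx'1 hx'n (p ^ m - 1) (p ^ m - 1) (by omega)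
        rw [hwdef, h, Nat.sub_self, Nat.choose_self, pow_zero, one_smul]
      have hwK : d (p * (p ^ m - 1)) ↑w = 1 := by
        have h := congrArg (fun z : C₁ => (z : K)) hw
        rw [hd'coe _ w (hpm_lt _ (by omega))] at h
        rw [h]
        rfl
      have hqp : p * (p ^ m - 1) = q - p := by
        obtain ⟨s, hs⟩ : ∃ s, p ^ m = s + 1 := ⟨p ^ m - 1, by omega⟩
        rw [hs, hqm, hs, Nat.add_sub_cancel, Nat.mul_add, Nat.mul_one, Nat.add_sub_cancel]
      rw [hqp] at hwK
      -- v = w * x₁^(p-1)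
      set v : K := ↑w * x₁ ^ (p - 1) with hvdef
      have hv1 : d (p - 1) v = ↑w := by
        rw [hvdef, hd.2.2 (p - 1) (by omega) ↑w (x₁ ^ (p - 1))]
        rw [sum_anti_one (p - 1) (fun i j => d i ↑w * d j (x₁ ^ (p - 1))) ?_]
        · rw [hd.2.1]
          rw [dpow hd (N := p) hpq hx11 hx1i (p - 1) (p - 1) (by omega)]
          rw [Nat.sub_self, Nat.choose_self, pow_zero, one_smul, mul_one]
        · intro i j hij hi
          show d i ↑w * d j (x₁ ^ (p - 1)) = 0
          have hpi : ¬ p ∣ i := by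
            intro hdvd
            have := Nat.le_of_dvd (by omega) hdvd
            omega
          rw [w.2 i (by omega) hpi, zero_mul]
      have hcomp := hiter.1 (q - p) (p - 1) (by omega) (by omega) (by omega) v
      rw [hv1, hwK] at hcomp
      have hvne : d (q - 1) v ≠ 0 := by
        intro h0
        rw [show (q - p) + (p - 1) = q - 1 by omega, h0, smul_zero] at hcomp
        exact one_ne_zero hcomp
      exact dfinal hp hd hiter (by omega) v hvne

end GaAux

/-- A `G_a[m]`-derivation on a field of characteristic `p > 0` with `d 1 ≠ 0` admits a
canonical element: an `x` with `d 1 x = 1` and `d n x = 0` for `2 ≤ n ≤ p ^ m - 1`. -/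
theorem ga_trunc_canonical_element (p : ℕ) (hp : p.Prime) (m : ℕ) (hm : 0 < m)
    (K : Type*) [Field K] [CharP K p]
    (d : ℕ → K → K)
    (hd : IsTruncHSDeriv p m d)
    (hiter : IsGaIterativeTrunc p m d)
    (hne : d 1 ≠ 0) :
    ∃ x : K, d 1 x = 1 ∧ ∀ n : ℕ, 2 ≤ n → n ≤ p ^ m - 1 → d n x = 0 := by
  obtain ⟨x, hx1, hxn⟩ := GaAux.main_aux hp m hm K inferInstance inferInstance d hd hiter hne
  refine ⟨x, hx1, ?_⟩
  intro n h2 hle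
  have hq : 0 < p ^ m := pow_pos hp.pos m
  exact hxn n h2 (by omega)
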